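/- arXiv:2510.26515 — 3 statements merged into one kernel-verified Lean document; each statement's English description precedes it below -/
import Mathlib

section
/- Let F = F_{a,v} be a Misiurewicz cubic map with data (ℓ, m, a_0), assume A_0 := (F^{∘ℓ})′(2a) ≠ 0, set λ_0 := (F^{∘m})′(a_0), ρ_k := 1/(A_0 λ_0^k), and let φ be the non-constant entire locally uniform limit of φ_k(w) := F^{∘(ℓ+km)}(2a + ρ_k w). Set 𝒦 := φ^{-1}(K_F). Then there exists r_0 > 0 such that for every r ≥ r_0, the Hausdorff distance between [{(z − 2a)/ρ_k : z ∈ K_F}]_r and [𝒦]_r tends to 0 as k → ∞. -/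
open Complex Metric Filter Function

/-- Milnor normal form cubic polynomial `F_{a,v}(z) = z^3 - 3a^2 z + (2a^3 + v)`. -/
noncomputable def Fav (a v : ℂ) : ℂ → ℂ := fun z => z ^ 3 - 3 * a ^ 2 * z + (2 * a ^ 3 + v)

/-- Filled Julia set of an entire map: points with bounded forward orbit. -/
def filledJulia (F : ℂ → ℂ) : Set ℂ :=
  {z : ℂ | Bornology.IsBounded (Set.range fun n : ℕ => F^[n] z)}

/-- The window `[A]_r = (A ∩ closedBall 0 r) ∪ sphere 0 r`. -/
def window (A : Set ℂ) (r : ℝ) : Set ℂ :=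
  (A ∩ Metric.closedBall (0 : ℂ) r) ∪ Metric.sphere (0 : ℂ) r

/-- `F_{a,v}` is a Misiurewicz map with data `(l, m, a0)`. -/
structure IsMisiurewicz (a v : ℂ) (l m : ℕ) (a0 : ℂ) : Prop where
  marked_periodic : ∃ p : ℕ, 1 ≤ p ∧ (Fav a v)^[p] a = a
  free_not_periodic : ∀ n : ℕ, 1 ≤ n → (Fav a v)^[n] (-a) ≠ -a
  hl : 1 ≤ l
  hm : 1 ≤ m
  ha0 : (Fav a v)^[l] (2 * a) = a0
  hper : (Fav a v)^[m] a0 = a0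
  hrep : 1 < ‖deriv ((Fav a v)^[m]) a0‖

lemma Fav_differentiable (a v : ℂ) : Differentiable ℂ (Fav a v) := by
  unfold Fav; fun_prop

/-- one step full invariance -/
lemma filledJulia_mem_apply_iff {F : ℂ → ℂ} (z : ℂ) :
    F z ∈ filledJulia F ↔ z ∈ filledJulia F := by
  simp only [filledJulia, Set.mem_setOf_eq]
  constructor
  · intro h
    have hsub : (Set.range fun n : ℕ => F^[n] z) ⊆
        insert z (Set.range fun n : ℕ => F^[n] (F z)) := by
      rintro x ⟨n, rfl⟩
      cases n with
      | zero => exact Set.mem_insert _ _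
      | succ k => exact Set.mem_insert_of_mem _ ⟨k, (Function.iterate_succ_apply F k z).symm⟩
    exact (h.insert z).subset hsub
  · intro h
    have hsub : (Set.range fun n : ℕ => F^[n] (F z)) ⊆
        (Set.range fun n : ℕ => F^[n] z) := by
      rintro x ⟨n, rfl⟩
      exact ⟨n + 1, Function.iterate_succ_apply F n z⟩
    exact h.subset hsub

lemma filledJulia_mem_iterate_iff {F : ℂ → ℂ} (n : ℕ) (z : ℂ) :
    F^[n] z ∈ filledJulia F ↔ z ∈ filledJulia F := by
  induction n with
  | zero => rfl
  | succ k ih =>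
    rw [Function.iterate_succ_apply' F k z, filledJulia_mem_apply_iff, ih]

lemma periodic_mem_filledJulia {F : ℂ → ℂ} {x : ℂ} {p : ℕ} (hp : 1 ≤ p)
    (hx : F^[p] x = x) : x ∈ filledJulia F := by
  simp only [filledJulia, Set.mem_setOf_eq]
  have key : ∀ n : ℕ, F^[n] x = F^[n % p] x := by
    intro n
    induction n using Nat.strong_induction_on with
    | _ n ih =>
      rcases lt_or_ge n p with h | h
      · rw [Nat.mod_eq_of_lt h]
      · have h1 : n = (n - p) + p := (Nat.sub_add_cancel h).symm
        have h2 : F^[n] x = F^[n - p] x := by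
          conv_lhs => rw [h1]
          rw [Function.iterate_add_apply, hx]
        rw [h2, ih (n - p) (by omega), Nat.mod_eq_sub_mod h]
  have hsub : (Set.range fun n : ℕ => F^[n] x) ⊆ (fun i : ℕ => F^[i] x) '' (Set.Iio p) := by
    rintro y ⟨n, rfl⟩
    exact ⟨n % p, Nat.mod_lt _ (by omega), (key n).symm⟩
  exact (((Set.finite_Iio p).image _).isBounded).subset hsub

lemma Fav_escape (a v : ℂ) {z : ℂ}
    (hz : 3 * ‖a‖ ^ 2 + ‖2 * a ^ 3 + v‖ + 2 ≤ ‖z‖) :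
    2 * ‖z‖ ≤ ‖Fav a v z‖ := by
  have hA : (0:ℝ) ≤ ‖a‖ := norm_nonneg _
  have hC : (0:ℝ) ≤ ‖2 * a ^ 3 + v‖ := norm_nonneg _
  have h1 : ‖z ^ 3‖ - ‖3 * a ^ 2 * z - (2 * a ^ 3 + v)‖ ≤ ‖Fav a v z‖ := by
    have : Fav a v z = z ^ 3 - (3 * a ^ 2 * z - (2 * a ^ 3 + v)) := by
      unfold Fav; ring
    rw [this]
    exact norm_sub_norm_le _ _
  have h2 : ‖3 * a ^ 2 * z - (2 * a ^ 3 + v)‖ ≤ 3 * ‖a‖ ^ 2 * ‖z‖ + ‖2 * a ^ 3 + v‖ := by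
    calc ‖3 * a ^ 2 * z - (2 * a ^ 3 + v)‖ ≤ ‖3 * a ^ 2 * z‖ + ‖2 * a ^ 3 + v‖ :=
          norm_sub_le _ _
      _ = 3 * ‖a‖ ^ 2 * ‖z‖ + ‖2 * a ^ 3 + v‖ := by
          rw [norm_mul, norm_mul, norm_pow]
          norm_num [Complex.norm_ofNat]
  have h3 : ‖z ^ 3‖ = ‖z‖ ^ 3 := norm_pow z 3
  nlinarith [norm_nonneg z, sq_nonneg (‖z‖ - 1), sq_nonneg ‖z‖,
    mul_le_mul_of_nonneg_left hz (norm_nonneg z)]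

lemma isClosed_filledJulia (a v : ℂ) : IsClosed (filledJulia (Fav a v)) := by
  set F := Fav a v with hF
  set R : ℝ := 3 * ‖a‖ ^ 2 + ‖2 * a ^ 3 + v‖ + 2 with hR
  have hR2 : (2:ℝ) ≤ R := by
    have h1 : (0:ℝ) ≤ ‖a‖ ^ 2 := sq_nonneg _
    have h2 : (0:ℝ) ≤ ‖2 * a ^ 3 + v‖ := norm_nonneg _
    rw [hR]; linarith
  have key : filledJulia F = ⋂ n : ℕ, (fun z => F^[n] z) ⁻¹' Metric.closedBall 0 R := by
    ext z
    simp only [filledJulia, Set.mem_setOf_eq, Set.mem_iInter, Set.mem_preimage,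
      Metric.mem_closedBall, dist_zero_right]
    constructor
    · intro hb
      by_contra hcon
      push_neg at hcon
      obtain ⟨n, hn⟩ := hcon
      -- escape to infinity
      have grow : ∀ j : ℕ, R < ‖F^[n + j] z‖ ∧ 2 ^ j * ‖F^[n] z‖ ≤ ‖F^[n + j] z‖ := by
        intro j
        induction j with
        | zero => exact ⟨by simpa using hn, by simp⟩
        | succ i ih =>
          have hFi : F^[n + (i+1)] z = F (F^[n + i] z) := by
            rw [← Function.iterate_succ_apply' F (n+i) z]
            rfl
          have hesc : 2 * ‖F^[n+i] z‖ ≤ ‖F (F^[n+i] z)‖ := Fav_escape a v (le_of_lt ih.1)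
          constructor
          · rw [hFi]
            have : ‖F^[n+i] z‖ ≤ 2 * ‖F^[n+i] z‖ := by nlinarith [ih.1, hR2]
            linarith [ih.1]
          · rw [hFi, pow_succ]
            calc 2 ^ i * 2 * ‖F^[n] z‖ = 2 * (2 ^ i * ‖F^[n] z‖) := by ring
              _ ≤ 2 * ‖F^[n+i] z‖ := by linarith [ih.2]
              _ ≤ ‖F (F^[n+i] z)‖ := hesc
      obtain ⟨C, hC⟩ := Bornology.IsBounded.exists_norm_le hb
      obtain ⟨j, hj⟩ := pow_unbounded_of_one_lt C (one_lt_two (α := ℝ))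
      have h1 := (grow j).2
      have h2 : ‖F^[n] z‖ ≥ 1 := by linarith [hn, hR2]
      have h3 : (2:ℝ) ^ j ≤ 2 ^ j * ‖F^[n] z‖ := by nlinarith [pow_pos (zero_lt_two (α := ℝ)) j]
      have h4 := hC (F^[n+j] z) ⟨n + j, rfl⟩
      linarith
    · intro hb
      refine (Metric.isBounded_closedBall (x := (0:ℂ)) (r := R)).subset ?_
      rintro x ⟨n, rfl⟩
      simpa [dist_zero_right] using hb n
  rw [key]
  refine isClosed_iInter fun n => IsClosed.preimage ?_ Metric.isClosed_closedBall
  exact ((Fav_differentiable a v).iterate n).continuous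


/-- Hurwitz-style value attainment for locally uniform limits. -/
lemma hurwitz_attain {φ : ℂ → ℂ} (hφd : Differentiable ℂ φ)
    (hnc : ∃ w₁ w₂ : ℂ, φ w₁ ≠ φ w₂)
    {ψ : ℕ → ℂ → ℂ} (hψd : ∀ k, Differentiable ℂ (ψ k))
    (h : TendstoLocallyUniformly ψ φ atTop) (w : ℂ) {ε : ℝ} (hε : 0 < ε) :
    ∀ᶠ k in atTop, ∃ y, dist y w ≤ ε ∧ ψ k y = φ w := by
  have hgan : AnalyticAt ℂ (fun z => φ z - φ w) w := ((hφd.sub_const (φ w)).analyticAt w)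
  rcases hgan.eventually_eq_zero_or_eventually_ne_zero with hz | hz
  · -- φ locally constant ⟹ constant, contradiction
    exfalso
    obtain ⟨w₁, w₂, hne⟩ := hnc
    have hconst : Set.EqOn φ (fun _ => φ w) Set.univ := by
      apply AnalyticOnNhd.eqOn_of_preconnected_of_eventuallyEq
        (analyticOnNhd_univ_iff_differentiable.2 hφd)
        (analyticOnNhd_univ_iff_differentiable.2 (differentiable_const _))
        isPreconnected_univ (Set.mem_univ w)
      filter_upwards [hz] with z hz'
      simpa [sub_eq_zero] using hz'
    exact hne ((hconst (Set.mem_univ w₁)).trans (hconst (Set.mem_univ w₂)).symm)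
  · -- isolated zero: find a circle where φ - φ w is bounded below
    rw [eventually_nhdsWithin_iff] at hz
    rw [Metric.eventually_nhds_iff] at hz
    obtain ⟨δ, hδ, hδ'⟩ := hz
    set s : ℝ := min (δ / 2) ε with hs
    have hs0 : 0 < s := lt_min (by linarith) hε
    have hsph : ∀ z ∈ sphere w s, φ z - φ w ≠ 0 := by
      intro z hzs
      have hd : dist z w = s := Metric.mem_sphere.1 hzs
      apply hδ' (by rw [hd]; exact lt_of_le_of_lt (min_le_left _ _) (by linarith))
      simp only [Set.mem_compl_iff, Set.mem_singleton_iff]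
      intro hzw
      rw [hzw, dist_self] at hd
      exact hs0.ne' hd.symm
    obtain ⟨z₀, hz₀s, hz₀min⟩ :=
      (isCompact_sphere w s).exists_isMinOn
        (NormedSpace.sphere_nonempty.2 hs0.le)
        ((continuous_norm.comp ((hφd.sub_const (φ w)).continuous)).continuousOn)
    rw [isMinOn_iff] at hz₀min
    set δ₀ : ℝ := ‖φ z₀ - φ w‖ with hδ₀
    have hδ₀pos : 0 < δ₀ := norm_pos_iff.2 (hsph z₀ hz₀s)
    -- uniform convergence on the closed ball
    have huk : TendstoUniformlyOn ψ φ atTop (Metric.closedBall w s) := by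
      have h1 : TendstoLocallyUniformlyOn ψ φ atTop (Metric.closedBall w s) :=
        (tendstoLocallyUniformlyOn_univ.2 h).mono (Set.subset_univ _)
      exact (tendstoLocallyUniformlyOn_iff_tendstoUniformlyOn_of_compact
        (isCompact_closedBall w s)).1 h1
    have hev := (Metric.tendstoUniformlyOn_iff.1 huk) (δ₀ / 2) (by linarith)
    filter_upwards [hev] with k hk
    by_contra hcon
    push_neg at hcon
    have hnz : ∀ y ∈ Metric.closedBall w s, ψ k y - φ w ≠ 0 := by
      intro y hy hy0
      have : dist y w ≤ s := by simpa [Metric.mem_closedBall] using hy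
      exact absurd (sub_eq_zero.1 hy0) (fun he => by
        have := hcon y (this.trans (min_le_right _ _))
        exact this he)
    -- minimum modulus principle via maximum principle for the inverse
    set g : ℂ → ℂ := fun y => (ψ k y - φ w)⁻¹ with hg
    have hbound : ∀ z ∈ frontier (Metric.ball w s), ‖g z‖ ≤ (δ₀ / 2)⁻¹ := by
      intro z hzf
      rw [frontier_ball w hs0.ne'] at hzf
      have h1 : δ₀ ≤ ‖φ z - φ w‖ := hz₀min z hzf
      have h2 : dist (φ z) (ψ k z) < δ₀ / 2 :=
        hk z (Metric.sphere_subset_closedBall hzf)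
      have h3 : δ₀ / 2 ≤ ‖ψ k z - φ w‖ := by
        have h4 : ‖φ z - ψ k z‖ < δ₀ / 2 := by rwa [dist_eq_norm] at h2
        have h5 : ‖φ z - φ w‖ - ‖φ z - ψ k z‖ ≤ ‖ψ k z - φ w‖ := by
          have := norm_sub_norm_le (φ z - φ w) (φ z - ψ k z)
          simpa [sub_sub_sub_cancel_left] using this
        linarith
      show ‖(ψ k z - φ w)⁻¹‖ ≤ (δ₀ / 2)⁻¹
      rw [norm_inv]
      exact inv_anti₀ (by linarith) h3
    have hdc : DiffContOnCl ℂ g (Metric.ball w s) := by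
      constructor
      · apply DifferentiableOn.inv
        · exact ((hψd k).sub_const (φ w)).differentiableOn
        · intro x hx
          exact hnz x (Metric.ball_subset_closedBall hx)
      · rw [closure_ball w hs0.ne']
        exact ContinuousOn.inv₀ ((((hψd k).sub_const (φ w)).continuous).continuousOn) hnz
    have hmm : ‖g w‖ ≤ (δ₀ / 2)⁻¹ :=
      Complex.norm_le_of_forall_mem_frontier_norm_le Metric.isBounded_ball hdc hbound
        (by rw [closure_ball w hs0.ne']; exact Metric.mem_closedBall_self hs0.le)
    have h7 : ψ k w - φ w ≠ 0 := hnz w (Metric.mem_closedBall_self hs0.le)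
    have h6 : δ₀ / 2 ≤ ‖ψ k w - φ w‖ := by
      have : ‖(ψ k w - φ w)⁻¹‖ ≤ (δ₀ / 2)⁻¹ := hmm
      rw [norm_inv, inv_le_inv₀ (norm_pos_iff.2 h7) (by linarith)] at this
      exact this
    have h8 : dist (φ w) (ψ k w) < δ₀ / 2 := hk w (Metric.mem_closedBall_self hs0.le)
    rw [dist_eq_norm, ← norm_neg] at h8
    simp only [neg_sub] at h8
    linarith

theorem stmt3 (a v : ℂ) (l m : ℕ) (a0 : ℂ) (hmis : IsMisiurewicz a v l m a0)
    (hA0 : deriv ((Fav a v)^[l]) (2 * a) ≠ 0)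
    (ρ : ℕ → ℂ)
    (hρ : ∀ k, ρ k = 1 / (deriv ((Fav a v)^[l]) (2 * a) * (deriv ((Fav a v)^[m]) a0) ^ k))
    (φ : ℂ → ℂ) (hφd : Differentiable ℂ φ) (hφnc : ∃ w₁ w₂ : ℂ, φ w₁ ≠ φ w₂)
    (hφ : TendstoLocallyUniformly
      (fun (k : ℕ) (w : ℂ) => (Fav a v)^[l + k * m] (2 * a + ρ k * w)) φ atTop) :
    ∃ r0 : ℝ, 0 < r0 ∧ ∀ r : ℝ, r0 ≤ r →
      Tendsto (fun k : ℕ => Metric.hausdorffDist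
        (window ((fun z => (z - 2 * a) / ρ k) '' filledJulia (Fav a v)) r)
        (window (φ ⁻¹' filledJulia (Fav a v)) r)) atTop (nhds 0) := by
  obtain ⟨p, hp1, hpa⟩ := hmis.marked_periodic
  have hKc : IsClosed (filledJulia (Fav a v)) := isClosed_filledJulia a v
  have hKne : (filledJulia (Fav a v)).Nonempty := ⟨a, periodic_mem_filledJulia hp1 hpa⟩
  have hlam0 : deriv ((Fav a v)^[m]) a0 ≠ 0 := by
    intro h
    have h2 := hmis.hrep
    rw [h, norm_zero] at h2
    linarith
  have hρ0 : ∀ k, ρ k ≠ 0 := fun k => by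
    rw [hρ k]
    exact one_div_ne_zero (mul_ne_zero hA0 (pow_ne_zero _ hlam0))
  set ψ : ℕ → ℂ → ℂ := fun k w => (Fav a v)^[l + k * m] (2 * a + ρ k * w) with hψdef
  have hψd : ∀ k, Differentiable ℂ (ψ k) := fun k =>
    ((Fav_differentiable a v).iterate _).comp (by fun_prop)
  have himg : ∀ k, (fun z => (z - 2 * a) / ρ k) '' filledJulia (Fav a v)
      = ψ k ⁻¹' filledJulia (Fav a v) := by
    intro k
    ext w
    simp only [Set.mem_image, Set.mem_preimage, hψdef]
    constructor
    · rintro ⟨z, hz, rfl⟩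
      have h0 := hρ0 k
      have he : 2 * a + ρ k * ((z - 2 * a) / ρ k) = z := by
        field_simp
        ring
      rw [he]
      exact (filledJulia_mem_iterate_iff _ _).2 hz
    · intro hw
      have h0 := hρ0 k
      refine ⟨2 * a + ρ k * w, (filledJulia_mem_iterate_iff (l + k * m) _).1 hw, ?_⟩
      field_simp
      ring
  refine ⟨1, one_pos, fun r hr => ?_⟩
  have hr0 : (0:ℝ) < r := lt_of_lt_of_le one_pos hr
  set T : Set ℂ := φ ⁻¹' filledJulia (Fav a v) with hTdef
  have hTc : IsClosed T := hKc.preimage hφd.continuous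
  have hWTne : (window T r).Nonempty := by
    obtain ⟨x, hx⟩ := NormedSpace.sphere_nonempty (x := (0:ℂ)) (r := r) |>.2 hr0.le
    exact ⟨x, Or.inr hx⟩
  rw [Metric.tendsto_atTop]
  intro ε hε
  set ε' : ℝ := ε / 2 with hε'def
  have hε'pos : 0 < ε' := by rw [hε'def]; linarith
  have hUD : TendstoUniformlyOn ψ φ atTop (Metric.closedBall 0 r) := by
    have h1 : TendstoLocallyUniformlyOn ψ φ atTop (Metric.closedBall 0 r) :=
      (tendstoLocallyUniformlyOn_univ.2 hφ).mono (Set.subset_univ _)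
    exact (tendstoLocallyUniformlyOn_iff_tendstoUniformlyOn_of_compact
      (isCompact_closedBall 0 r)).1 h1
  -- Direction A
  set W : Set ℂ := {z | z ∈ Metric.closedBall (0:ℂ) r ∧
      ε' ≤ Metric.infDist z (window T r)} with hWdef
  have hWclosed : IsClosed W := by
    have : W = Metric.closedBall (0:ℂ) r ∩
        (fun z => Metric.infDist z (window T r)) ⁻¹' Set.Ici ε' := by
      ext z; simp [hWdef, Set.mem_inter_iff]
    rw [this]
    exact Metric.isClosed_closedBall.inter (isClosed_Ici.preimage (Metric.continuous_infDist_pt _))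
  have hWcomp : IsCompact W :=
    (isCompact_closedBall (0:ℂ) r).of_isClosed_subset hWclosed (fun z hz => hz.1)
  have hWK : ∀ z ∈ W, φ z ∉ filledJulia (Fav a v) := by
    intro z hz hzK
    have hzw : z ∈ window T r := Or.inl ⟨hzK, hz.1⟩
    have h0 : Metric.infDist z (window T r) = 0 := Metric.infDist_zero_of_mem hzw
    have h2 := hz.2
    rw [h0] at h2
    linarith
  have keyA : ∀ᶠ k in atTop, ∀ x ∈ Metric.closedBall (0:ℂ) r,
      x ∈ ψ k ⁻¹' filledJulia (Fav a v) → x ∉ W := by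
    rcases W.eq_empty_or_nonempty with hWe | hWne
    · filter_upwards with k x _ _ hxW
      rw [hWe] at hxW
      exact hxW
    · obtain ⟨z₁, hz₁W, hz₁min⟩ := hWcomp.exists_isMinOn hWne
        (((Metric.continuous_infDist_pt (filledJulia (Fav a v))).comp
          hφd.continuous).continuousOn)
      rw [isMinOn_iff] at hz₁min
      have hδpos : 0 < Metric.infDist (φ z₁) (filledJulia (Fav a v)) :=
        (hKc.notMem_iff_infDist_pos hKne).1 (hWK z₁ hz₁W)
      filter_upwards [(Metric.tendstoUniformlyOn_iff.1 hUD) _ hδpos] with k hk x hxD hxK hxW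
      have h1 := hz₁min x hxW
      have h2 : Metric.infDist (φ x) (filledJulia (Fav a v)) ≤ dist (φ x) (ψ k x) :=
        Metric.infDist_le_dist_of_mem hxK
      have h3 := hk x hxD
      simp only [Function.comp] at h1
      linarith
  have E1 : ∀ᶠ k in atTop, ∀ x ∈ window (ψ k ⁻¹' filledJulia (Fav a v)) r,
      ∃ y ∈ window T r, dist x y ≤ ε' := by
    filter_upwards [keyA] with k hk x hx
    rcases hx with ⟨hxK, hxD⟩ | hxs
    · have hxW : x ∉ W := hk x hxD hxK
      have : Metric.infDist x (window T r) < ε' := by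
        by_contra hcon
        exact hxW ⟨hxD, not_lt.1 hcon⟩
      obtain ⟨y, hy, hxy⟩ := (Metric.infDist_lt_iff hWTne).1 this
      exact ⟨y, hy, hxy.le⟩
    · exact ⟨x, Or.inr hxs, by simpa using hε'pos.le⟩
  -- Direction B
  have E2 : ∀ᶠ k in atTop, ∀ y ∈ window T r,
      ∃ x ∈ window (ψ k ⁻¹' filledJulia (Fav a v)) r, dist x y ≤ ε' := by
    set C : Set ℂ := T ∩ Metric.closedBall (0:ℂ) r with hCdef
    have hCcomp : IsCompact C :=
      (isCompact_closedBall (0:ℂ) r).of_isClosed_subset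
        (hTc.inter Metric.isClosed_closedBall) Set.inter_subset_right
    rcases C.eq_empty_or_nonempty with hCe | _
    · filter_upwards with k y hy
      rcases hy with hyC | hys
      · rw [← hCdef] at hyC
        rw [hCe] at hyC
        exact absurd hyC (Set.notMem_empty y)
      · exact ⟨y, Or.inr hys, by simpa using hε'pos.le⟩
    · have hcov : C ⊆ ⋃ w ∈ C, Metric.ball w (ε' / 2) :=
        fun w hw => Set.mem_biUnion hw (Metric.mem_ball_self (by linarith))
      obtain ⟨t, htC, htfin, htcov⟩ := hCcomp.elim_finite_subcover_image
        (fun w _ => Metric.isOpen_ball) hcov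
      have hall : ∀ᶠ k in atTop, ∀ w ∈ t, ∃ y, dist y w ≤ ε' / 4 ∧ ψ k y = φ w :=
        (htfin.eventually_all).2 fun w _ =>
          hurwitz_attain hφd hφnc hψd hφ w (by linarith)
      filter_upwards [hall] with k hk y hy
      rcases hy with hyC | hys
      · have hyC' : y ∈ C := ⟨hyC.1, hyC.2⟩
        obtain ⟨w, hwt, hyw⟩ := Set.mem_iUnion₂.1 (htcov hyC')
        obtain ⟨x, hxw, hxval⟩ := hk w hwt
        have hwC : w ∈ C := htC hwt
        have hxK : x ∈ ψ k ⁻¹' filledJulia (Fav a v) := by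
          simp only [Set.mem_preimage, hxval]
          exact hwC.1
        have hwr : ‖w‖ ≤ r := by
          have := hwC.2
          simpa [Metric.mem_closedBall, dist_zero_right] using this
        have hxnorm : ‖x‖ ≤ r + ε' / 4 := by
          have h1 : ‖x‖ - ‖w‖ ≤ dist x w := by
            rw [dist_eq_norm]
            exact norm_sub_norm_le x w
          linarith [hxw, hwr, h1]
        have hdyw : dist y w < ε' / 2 := by
          simpa [Metric.mem_ball] using hyw
        rcases le_or_gt ‖x‖ r with hxr | hxr
        · refine ⟨x, Or.inl ⟨hxK, by simpa [Metric.mem_closedBall, dist_zero_right] using hxr⟩, ?_⟩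
          calc dist x y ≤ dist x w + dist w y := dist_triangle _ _ _
            _ = dist x w + dist y w := by rw [dist_comm w y]
            _ ≤ ε' / 4 + ε' / 2 := by linarith [hxw, hdyw]
            _ ≤ ε' := by linarith
        · -- project x to the sphere
          have hx0 : (0:ℝ) < ‖x‖ := lt_trans hr0 hxr
          set x' : ℂ := ((r / ‖x‖ : ℝ) : ℂ) * x with hx'def
          have hx'n : ‖x'‖ = r := by
            rw [hx'def, norm_mul, Complex.norm_real, Real.norm_eq_abs,
              _root_.abs_of_nonneg (by positivity : (0:ℝ) ≤ r / ‖x‖),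
              div_mul_cancel₀ _ (ne_of_gt hx0)]
          have hx's : x' ∈ Metric.sphere (0:ℂ) r := by
            simp [Metric.mem_sphere, dist_zero_right, hx'n]
          have hdxx' : dist x x' = ‖x‖ - r := by
            rw [dist_eq_norm, hx'def]
            have : x - ((r / ‖x‖ : ℝ) : ℂ) * x = (((1 - r / ‖x‖ : ℝ)) : ℂ) * x := by
              push_cast
              ring
            rw [this, norm_mul, Complex.norm_real, Real.norm_eq_abs,
              _root_.abs_of_nonneg
                (by rw [sub_nonneg]; exact div_le_one_of_le₀ hxr.le hx0.le : (0:ℝ) ≤ 1 - r / ‖x‖),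
              sub_mul, one_mul, div_mul_cancel₀ _ (ne_of_gt hx0)]
          refine ⟨x', Or.inr hx's, ?_⟩
          calc dist x' y ≤ dist x' x + dist x w + dist w y := by
                have := dist_triangle4 x' x w y
                linarith [this]
            _ ≤ (‖x‖ - r) + ε' / 4 + ε' / 2 := by
                rw [dist_comm x' x, dist_comm w y]
                linarith [hdxx', hxw, hdyw]
            _ ≤ ε' / 4 + ε' / 4 + ε' / 2 := by linarith [hxnorm]
            _ ≤ ε' := by linarith
      · exact ⟨y, Or.inr hys, by simpa using hε'pos.le⟩
  obtain ⟨N, hN⟩ := eventually_atTop.1 (E1.and E2)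
  refine ⟨N, fun k hk => ?_⟩
  have hH : Metric.hausdorffDist (window (ψ k ⁻¹' filledJulia (Fav a v)) r) (window T r) ≤ ε' :=
    Metric.hausdorffDist_le_of_mem_dist hε'pos.le (hN k hk).1
      (fun y hy => ((hN k hk).2 y hy).imp fun x hx => ⟨hx.1, by
        rw [dist_comm]; exact hx.2⟩)
  rw [himg k]
  rw [Real.dist_eq, sub_zero, _root_.abs_of_nonneg Metric.hausdorffDist_nonneg]
  calc Metric.hausdorffDist (window (ψ k ⁻¹' filledJulia (Fav a v)) r) (window T r) ≤ ε' := hH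
    _ < ε := by rw [hε'def]; linarith
end

section
/- Let g : ℂ → ℂ be entire with g(0) = 0 and g′(0) = λ, where |λ| > 1. Then the functions ψ_n(w) := g^{∘n}(w/λ^n) converge locally uniformly on ℂ, as n → ∞, to an entire function ψ : ℂ → ℂ satisfying g(ψ(w)) = ψ(λw) for all w ∈ ℂ, ψ(0) = 0, and ψ′(0) = 1 (in particular ψ is non-constant). -/
open Complex Metric Filter Function Topology

/-- Postcomposition of a uniformly convergent family (with values in `t`) by a map
uniformly continuous on `t` preserves uniform convergence. -/
lemma tendstoUniformlyOn_postcomp {F : ℕ → ℂ → ℂ} {f : ℂ → ℂ} {s t : Set ℂ} {G : ℂ → ℂ}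
    (hF : TendstoUniformlyOn F f atTop s) (hFt : ∀ n, ∀ x ∈ s, F n x ∈ t)
    (hft : ∀ x ∈ s, f x ∈ t) (hG : UniformContinuousOn G t) :
    TendstoUniformlyOn (fun n x => G (F n x)) (fun x => G (f x)) atTop s := by
  rw [Metric.tendstoUniformlyOn_iff] at hF ⊢
  intro ε hε
  obtain ⟨η, hη, hGη⟩ := (Metric.uniformContinuousOn_iff).1 hG ε hε
  filter_upwards [hF η hη] with n hn x hx
  exact hGη (f x) (hft x hx) (F n x) (hFt n x hx) (hn x hx)

/-- If the `N`-shifted sequence converges uniformly, so does the original. -/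
lemma tendstoUniformlyOn_of_shift {F : ℕ → ℂ → ℂ} {f : ℂ → ℂ} {s : Set ℂ} (N : ℕ)
    (h : TendstoUniformlyOn (fun n => F (N + n)) f atTop s) :
    TendstoUniformlyOn F f atTop s := by
  intro u hu
  obtain ⟨a, ha⟩ := eventually_atTop.mp (h u hu)
  refine eventually_atTop.2 ⟨N + a, fun b hb x hx => ?_⟩
  have hb' : N + (b - N) = b := by omega
  have := ha (b - N) (by omega) x hx
  simpa only [hb'] using this

private lemma koenigs_le_one (δ K t A : ℝ) (hδhalf : δ ≤ 1/2) (hδ0 : 0 < δ)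
    (ht0 : 0 < t) (ht1 : t ≤ 1) (hK0 : 0 ≤ K) (hKt : K*t ≤ 1)
    (hA : A ≤ δ*t*(1+K*t)) : A ≤ 1 := by
  have h1 : δ*t ≤ δ := by nlinarith
  have h3 : δ*t*(K*t) ≤ δ := by
    nlinarith [mul_le_mul h1 hKt (mul_nonneg hK0 ht0.le) hδ0.le]
  nlinarith

private lemma koenigs_step (μ δ C K t A G : ℝ) (hμ0 : 0 < μ) (hδ0 : 0 < δ)
    (hC0 : 0 ≤ C) (hK0 : 0 ≤ K) (hKeq : K*(μ^2 - μ) = 4*C*δ)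
    (ht0 : 0 < t) (ht1 : t ≤ 1) (hKt : K*t ≤ 1) (hA0 : 0 ≤ A)
    (hA : A ≤ δ*t*(1+K*t)) (hG : G ≤ μ*A + C*A^2) :
    G ≤ δ*(μ*t)*(1+K*(μ*t)) := by
  have hAt : A ≤ 2*(δ*t) := by
    nlinarith [mul_le_mul_of_nonneg_left hKt (mul_nonneg hδ0.le ht0.le)]
  have hAsq : A^2 ≤ (2*(δ*t))^2 := pow_le_pow_left₀ hA0 hAt 2
  have h2 : C * A^2 ≤ 4*C*δ^2*t^2 := by nlinarith [mul_le_mul_of_nonneg_left hAsq hC0]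
  have h3 : G ≤ μ * (δ*t*(1+K*t)) + 4*C*δ^2*t^2 := by
    linarith [mul_le_mul_of_nonneg_left hA hμ0.le]
  calc G ≤ μ * (δ*t*(1+K*t)) + 4*C*δ^2*t^2 := h3
    _ = δ*(μ*t)*(1+K*(μ*t)) := by linear_combination (-(δ*t^2)) * hKeq

set_option maxHeartbeats 1000000 in
theorem stmt5 (g : ℂ → ℂ) (hg : Differentiable ℂ g) (lam : ℂ)
    (hg0 : g 0 = 0) (hg' : deriv g 0 = lam) (hlam : 1 < ‖lam‖) :
    ∃ ψ : ℂ → ℂ, Differentiable ℂ ψ ∧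
      TendstoLocallyUniformly (fun (n : ℕ) (w : ℂ) => g^[n] (w / lam ^ n)) ψ atTop ∧
      (∀ w : ℂ, g (ψ w) = ψ (lam * w)) ∧ ψ 0 = 0 ∧ deriv ψ 0 = 1 := by
  have hlam0 : lam ≠ 0 := by
    intro h
    rw [h, norm_zero] at hlam
    linarith
  have hμ : (1:ℝ) < ‖lam‖ := hlam
  set μ : ℝ := ‖lam‖ with hμdef
  have hμ0 : (0:ℝ) < μ := lt_trans one_pos hμ
  have hμ1 : (1:ℝ) ≤ μ := le_of_lt hμ
  -- the quadratic remainder factor H : g z = lam z + z^2 H z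
  have hdg : Differentiable ℂ (dslope g 0) := by
    rw [← differentiableOn_univ] at hg ⊢
    exact (differentiableOn_dslope Filter.univ_mem).2 hg
  set H : ℂ → ℂ := dslope (dslope g 0) 0 with hHdef
  have hH : Differentiable ℂ H := by
    rw [hHdef, ← differentiableOn_univ]
    rw [← differentiableOn_univ] at hdg
    exact (differentiableOn_dslope Filter.univ_mem).2 hdg
  have hgeq : ∀ z : ℂ, g z = lam * z + z ^ 2 * H z := by
    intro z
    have h1 := sub_smul_dslope g 0 z
    have h2 := sub_smul_dslope (dslope g 0) 0 z
    have h3 : dslope g 0 0 = lam := by rw [dslope_same, hg']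
    simp only [sub_zero, smul_eq_mul, hg0, h3] at h1 h2
    rw [← h1]
    linear_combination (-z) * h2
  -- the linear remainder factor for deriv g
  have hdg' : Differentiable ℂ (deriv g) := by
    have hanal : AnalyticOnNhd ℂ g Set.univ := fun z _ => hg.analyticAt z
    exact fun z => (hanal.deriv z (Set.mem_univ z)).differentiableAt
  set H₂ : ℂ → ℂ := dslope (deriv g) 0 with hH₂def
  have hH₂ : Differentiable ℂ H₂ := by
    rw [hH₂def, ← differentiableOn_univ]
    rw [← differentiableOn_univ] at hdg'
    exact (differentiableOn_dslope Filter.univ_mem).2 hdg'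
  have hderiveq : ∀ z : ℂ, deriv g z = lam + z * H₂ z := by
    intro z
    have h2 := sub_smul_dslope (deriv g) 0 z
    simp only [sub_zero, smul_eq_mul, hg'] at h2
    linear_combination -h2
  -- bounds for H and H₂ on the unit ball
  obtain ⟨C₀, hC₀⟩ := (isCompact_closedBall (0:ℂ) 1).exists_bound_of_continuousOn
    (hH.continuous.continuousOn)
  obtain ⟨C₂', hC₂'⟩ := (isCompact_closedBall (0:ℂ) 1).exists_bound_of_continuousOn
    (hH₂.continuous.continuousOn)
  set C : ℝ := max C₀ 0 with hCdef
  set C₂ : ℝ := max C₂' 0 with hC₂def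
  have hC0 : 0 ≤ C := le_max_right _ _
  have hC₂0 : 0 ≤ C₂ := le_max_right _ _
  have hCb : ∀ x : ℂ, ‖x‖ ≤ 1 → ‖H x‖ ≤ C := by
    intro x hx
    have := hC₀ x (by simpa [mem_closedBall_zero_iff] using hx)
    exact le_trans (by simpa using this) (le_max_left _ _)
  have hC₂b : ∀ x : ℂ, ‖x‖ ≤ 1 → ‖H₂ x‖ ≤ C₂ := by
    intro x hx
    have := hC₂' x (by simpa [mem_closedBall_zero_iff] using hx)
    exact le_trans (by simpa using this) (le_max_left _ _)
  -- choice of constants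
  have hμμ : 0 < μ ^ 2 - μ := by nlinarith
  set δ : ℝ := min (1/2) (min ((μ^2 - μ)/(4*C+1)) ((μ^2 - μ)/(4*C₂+1))) with hδdef
  have hδ0 : 0 < δ := by
    refine lt_min (by norm_num) (lt_min ?_ ?_) <;> positivity
  have hδhalf : δ ≤ 1/2 := min_le_left _ _
  have hδC : 4*C*δ ≤ μ^2 - μ := by
    have h1 : δ ≤ (μ^2 - μ)/(4*C+1) := le_trans (min_le_right _ _) (min_le_left _ _)
    have h2 : 4*C*δ ≤ 4*C*((μ^2 - μ)/(4*C+1)) := by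
      apply mul_le_mul_of_nonneg_left h1 (by positivity)
    calc 4*C*δ ≤ 4*C*((μ^2 - μ)/(4*C+1)) := h2
      _ ≤ μ^2 - μ := by
          rw [← mul_div_assoc, div_le_iff₀ (by positivity)]
          nlinarith
  have hδC₂ : 2*C₂*δ ≤ (μ^2 - μ)/2 := by
    have h1 : δ ≤ (μ^2 - μ)/(4*C₂+1) := le_trans (min_le_right _ _) (min_le_right _ _)
    have h2 : 2*C₂*δ ≤ 2*C₂*((μ^2 - μ)/(4*C₂+1)) :=
      mul_le_mul_of_nonneg_left h1 (by positivity)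
    refine le_trans h2 ?_
    rw [← mul_div_assoc, div_le_div_iff₀ (by positivity) (by positivity)]
    nlinarith
  set K : ℝ := 4*C*δ/(μ^2 - μ) with hKdef
  have hK0 : 0 ≤ K := by positivity
  have hK1 : K ≤ 1 := by
    rw [hKdef, div_le_one hμμ]; exact hδC
  have hKeq : K * (μ^2 - μ) = 4*C*δ := by
    rw [hKdef]; exact div_mul_cancel₀ _ hμμ.ne'
  set ν : ℝ := μ + 2*C₂*δ with hνdef
  have hν1 : 1 < ν := by nlinarith
  have hν0 : 0 < ν := lt_trans one_pos hν1
  have hνμ : ν < μ^2 := by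
    have := hδC₂; nlinarith
  set r : ℝ := ν / μ^2 with hrdef
  have hr0 : 0 < r := by positivity
  have hr1 : r < 1 := by rw [hrdef, div_lt_one (by positivity)]; exact hνμ
  -- the approximants
  set φ : ℕ → ℂ → ℂ := fun n w => g^[n] (w / lam ^ n) with hφdef
  have habspow : ∀ (n : ℕ) (w : ℂ), ‖w / lam ^ n‖ = ‖w‖ / μ ^ n := by
    intro n w; rw [norm_div, norm_pow]
  -- elementary bound for g
  have hgabs : ∀ u : ℂ, ‖u‖ ≤ 1 →
      ‖g u‖ ≤ μ * ‖u‖ + C * (‖u‖)^2 := by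
    intro u hu
    rw [hgeq u]
    calc ‖lam*u + u^2*H u‖
        ≤ ‖lam*u‖ + ‖u^2*H u‖ := norm_add_le _ _
      _ = μ * ‖u‖ + (‖u‖)^2 * ‖H u‖ := by
          rw [norm_mul, norm_mul, norm_pow]
      _ ≤ μ * ‖u‖ + C * (‖u‖)^2 := by
          nlinarith [mul_le_mul_of_nonneg_left (hCb u hu) (sq_nonneg (‖u‖))]
  -- Key orbit bound
  have key : ∀ n : ℕ, ∀ z : ℂ, ‖z‖ ≤ δ/μ^n*(1+K/μ^n) →
      ∀ k, k ≤ n → ‖g^[k] z‖ ≤ δ*(μ^k/μ^n)*(1+K*(μ^k/μ^n)) := by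
    intro n z hz k
    induction k with
    | zero =>
      intro _
      simp only [Function.iterate_zero, id_eq, pow_zero]
      have heq : δ*(1/μ^n)*(1+K*(1/μ^n)) = δ/μ^n*(1+K/μ^n) := by ring
      rw [heq]
      exact hz
    | succ k ih =>
      intro hk1
      have hk : k ≤ n := Nat.le_of_succ_le hk1
      have hA := ih hk
      set t : ℝ := μ^k/μ^n with htdef
      have ht0 : 0 < t := by positivity
      have htμ : μ * t ≤ 1 := by
        rw [htdef, ← mul_div_assoc, div_le_one (by positivity)]
        calc μ * μ^k = μ^(k+1) := by rw [pow_succ]; ring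
          _ ≤ μ^n := pow_le_pow_right₀ hμ1 hk1
      have ht1 : t ≤ 1 := le_trans (le_mul_of_one_le_left ht0.le hμ1) htμ
      have hKt : K * t ≤ 1 := mul_le_one₀ hK1 ht0.le ht1
      set x : ℂ := g^[k] z with hxdef
      have hA0 : 0 ≤ ‖x‖ := norm_nonneg x
      have hx1 : ‖x‖ ≤ 1 := koenigs_le_one δ K t _ hδhalf hδ0 ht0 ht1 hK0 hKt hA
      have hgx : ‖g x‖ ≤ μ * ‖x‖ + C * (‖x‖)^2 := hgabs x hx1
      have hiter : g^[k+1] z = g x := by rw [hxdef, Function.iterate_succ_apply']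
      rw [hiter]
      have hgoalt : μ^(k+1)/μ^n = μ * t := by
        rw [htdef, ← mul_div_assoc, pow_succ]; ring
      rw [hgoalt]
      exact koenigs_step μ δ C K t _ _ hμ0 hδ0 hC0 hK0 hKeq ht0 ht1 hKt hA0 hA hgx
  -- consequence: everything stays in the ball of radius 2δ
  have key2δ : ∀ n : ℕ, ∀ z : ℂ, ‖z‖ ≤ δ/μ^n*(1+K/μ^n) →
      ∀ k, k ≤ n → ‖g^[k] z‖ ≤ 2*δ := by
    intro n z hz k hk
    have h := key n z hz k hk
    have ht1 : μ^k/μ^n ≤ 1 := by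
      rw [div_le_one (by positivity)]; exact pow_le_pow_right₀ hμ1 hk
    have ht0 : (0:ℝ) < μ^k/μ^n := by positivity
    have hKt : K * (μ^k/μ^n) ≤ 1 := mul_le_one₀ hK1 ht0.le ht1
    nlinarith [mul_nonneg hδ0.le ht0.le]
  -- Lipschitz bound on the 2δ-ball
  have hlip : ∀ x y : ℂ, ‖x‖ ≤ 2*δ → ‖y‖ ≤ 2*δ →
      ‖g x - g y‖ ≤ ν * ‖x - y‖ := by
    intro x y hx hy
    have hbound : ∀ z ∈ closedBall (0:ℂ) (2*δ), ‖deriv g z‖ ≤ ν := by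
      intro z hz
      rw [mem_closedBall_zero_iff] at hz
      have hz2δ : ‖z‖ ≤ 2*δ := hz
      have hz1 : ‖z‖ ≤ 1 := le_trans hz2δ (by linarith)
      rw [hderiveq z]
      calc ‖lam + z * H₂ z‖ ≤ μ + ‖z‖ * ‖H₂ z‖ := by
            refine le_trans (norm_add_le _ _) ?_
            rw [norm_mul]
        _ ≤ μ + 2*δ*C₂ := by
            nlinarith [hC₂b z hz1, norm_nonneg z, norm_nonneg (H₂ z)]
        _ = ν := by rw [hνdef]; ring
    have h := Convex.norm_image_sub_le_of_norm_deriv_le (fun z _ => hg z) hbound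
      (convex_closedBall (0:ℂ) (2*δ)) (mem_closedBall_zero_iff.2 (by exact_mod_cast hy))
      (mem_closedBall_zero_iff.2 (by exact_mod_cast hx))
    simpa [Complex.dist_eq] using h
  -- base point bound
  have hbase : ∀ (n:ℕ) (w : ℂ), ‖w‖ ≤ δ →
      ‖w / lam^n‖ ≤ δ/μ^n*(1+K/μ^n) := by
    intro n w hw
    rw [habspow]
    have hp : (0:ℝ) < μ^n := pow_pos hμ0 n
    have h2 : ‖w‖ / μ^n ≤ δ/μ^n := by gcongr
    have h3 : (0:ℝ) ≤ (δ/μ^n)*(K/μ^n) := by positivity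
    nlinarith
  have hφval : ∀ (n:ℕ) (w:ℂ), ‖w‖ ≤ δ → ‖φ n w‖ ≤ 2*δ :=
    fun n w hw => key2δ n _ (hbase n w hw) n le_rfl
  -- geometric Cauchy estimate on the δ-ball
  have hcauchy : ∀ w : ℂ, ‖w‖ ≤ δ → ∀ n : ℕ,
      dist (φ n w) (φ (n+1) w) ≤ (C*δ^2) * r^n := by
    intro w hw n
    set p : ℝ := μ^n with hpdef
    have hp : (0:ℝ) < p := pow_pos hμ0 n
    have hp1 : (1:ℝ) ≤ p := by simpa using pow_le_pow_right₀ hμ1 (Nat.zero_le n)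
    have hμp : μ^(n+1) = μ*p := by rw [hpdef, pow_succ]; ring
    set u : ℂ := w / lam^(n+1) with hudef
    set z₀ : ℂ := w / lam ^ n with hz₀
    set z₁ : ℂ := g u with hz₁
    have hAu : ‖u‖ ≤ δ/(μ*p) := by
      rw [hudef, habspow, hμp]
      gcongr
    have hμp1 : (1:ℝ) ≤ μ*p := by nlinarith
    have hAu1 : ‖u‖ ≤ 1 := by
      refine le_trans hAu (le_trans (div_le_self hδ0.le hμp1) (by linarith : δ ≤ 1))
    have hKC : C*δ/μ^2 ≤ K := by
      rw [div_le_iff₀ (by positivity)]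
      nlinarith
    have hz₀b : ‖z₀‖ ≤ δ/μ^n*(1+K/μ^n) := hbase n w hw
    have hz₁b : ‖z₁‖ ≤ δ/μ^n*(1+K/μ^n) := by
      rw [hz₁]
      have h1 := hgabs u hAu1
      have hsq : (‖u‖)^2 ≤ (δ/(μ*p))^2 := pow_le_pow_left₀ (norm_nonneg u) hAu 2
      have h2 : ‖g u‖ ≤ μ*(δ/(μ*p)) + C*(δ/(μ*p))^2 := by
        linarith [mul_le_mul_of_nonneg_left hAu hμ0.le,
          mul_le_mul_of_nonneg_left hsq hC0]
      refine le_trans h2 ?_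
      rw [← hpdef]
      have heq : δ/p*(1+K/p) - (μ*(δ/(μ*p)) + C*(δ/(μ*p))^2)
          = (δ/p^2)*(K - C*δ/μ^2) := by
        field_simp
        ring
      linarith [heq, mul_nonneg (by positivity : (0:ℝ) ≤ δ/p^2) (by linarith : (0:ℝ) ≤ K - C*δ/μ^2)]
    have hdiff0 : ‖z₁ - z₀‖ ≤ C*δ^2/p^2 := by
      have hz10 : z₁ - z₀ = u^2 * H u := by
        rw [hz₁, hz₀, hgeq u, hudef]
        have hlamne : lam ^ (n+1) ≠ 0 := pow_ne_zero _ hlam0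
        have hlamne' : lam ^ n ≠ 0 := pow_ne_zero _ hlam0
        field_simp
        ring
      rw [hz10, norm_mul, norm_pow]
      have hup : ‖u‖ ≤ δ/p :=
        le_trans hAu (div_le_div_of_nonneg_left hδ0.le hp (le_mul_of_one_le_left hp.le hμ1))
      have hsq : (‖u‖)^2 ≤ (δ/p)^2 := pow_le_pow_left₀ (norm_nonneg u) hup 2
      have hHu : ‖H u‖ ≤ C := hCb u hAu1
      have heq : C*δ^2/p^2 = (δ/p)^2 * C := by field_simp
      rw [heq]
      exact mul_le_mul hsq hHu (norm_nonneg _) (by positivity)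
    have hdiffk : ∀ k, k ≤ n → ‖g^[k] z₁ - g^[k] z₀‖ ≤ ν^k * (C*δ^2/p^2) := by
      intro k
      induction k with
      | zero =>
        intro _
        simpa using hdiff0
      | succ k ih =>
        intro hk1
        have hk := Nat.le_of_succ_le hk1
        have h1 := ih hk
        have hx2 : ‖g^[k] z₁‖ ≤ 2*δ := key2δ n z₁ hz₁b k hk
        have hy2 : ‖g^[k] z₀‖ ≤ 2*δ := key2δ n z₀ hz₀b k hk
        rw [Function.iterate_succ_apply', Function.iterate_succ_apply']
        calc ‖g (g^[k] z₁) - g (g^[k] z₀)‖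
            ≤ ν * ‖g^[k] z₁ - g^[k] z₀‖ := hlip _ _ hx2 hy2
          _ ≤ ν * (ν^k * (C*δ^2/p^2)) := mul_le_mul_of_nonneg_left h1 hν0.le
          _ = ν^(k+1) * (C*δ^2/p^2) := by rw [pow_succ]; ring
    have hfinal := hdiffk n le_rfl
    have hφn : φ n w = g^[n] z₀ := rfl
    have hφn1 : φ (n+1) w = g^[n] z₁ := by
      simp only [hφdef, hz₁, hudef]
      rw [Function.iterate_succ_apply]
    rw [dist_comm, Complex.dist_eq, hφn, hφn1]
    have hrn : ν^n * (C*δ^2/p^2) = (C*δ^2) * r^n := by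
      rw [hrdef, hpdef, div_pow, ← pow_mul, ← pow_mul, mul_comm 2 n]
      field_simp
    rw [← hrn]
    exact hfinal
  -- pointwise convergence on the small ball
  have hconv_small : ∀ w : ℂ, ‖w‖ ≤ δ →
      ∃ L, Tendsto (fun n => φ n w) atTop (𝓝 L) := by
    intro w hw
    exact cauchySeq_tendsto_of_complete
      (cauchySeq_of_le_geometric (hr := hr1) (hu := hcauchy w hw) r (C*δ^2))
  -- shift identity
  have hshift_eq : ∀ (N n : ℕ) (w : ℂ), g^[N] (φ n (w / lam^N)) = φ (N + n) w := by
    intro N n w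
    simp only [hφdef]
    rw [← Function.iterate_add_apply]
    congr 1
    rw [div_div, ← pow_add]
  -- global pointwise convergence
  have hconv : ∀ w : ℂ, ∃ L, Tendsto (fun n => φ n w) atTop (𝓝 L) := by
    intro w
    obtain ⟨N, hN⟩ := pow_unbounded_of_one_lt (‖w‖ / δ) hμ
    have hwN : ‖w / lam^N‖ ≤ δ := by
      rw [habspow, div_le_iff₀ (pow_pos hμ0 N)]
      rw [div_lt_iff₀ hδ0] at hN
      nlinarith
    obtain ⟨L, hL⟩ := hconv_small _ hwN
    refine ⟨g^[N] L, ?_⟩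
    have h2 : Tendsto (fun n => g^[N] (φ n (w / lam^N))) atTop (𝓝 (g^[N] L)) :=
      ((hg.continuous.iterate N).tendsto L).comp hL
    have h4 : Tendsto (fun n => φ (N + n) w) atTop (𝓝 (g^[N] L)) := by
      simpa only [hshift_eq] using h2
    rw [← tendsto_add_atTop_iff_nat N]
    have heq : (fun n => φ (n + N) w) = fun n => φ (N + n) w := by
      ext n; rw [Nat.add_comm]
    rw [heq]
    exact h4
  choose ψ hψ using hconv
  -- distance to the limit on the small ball
  have hdistψ : ∀ w : ℂ, ‖w‖ ≤ δ → ∀ n,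
      dist (φ n w) (ψ w) ≤ C*δ^2 * r^n / (1-r) := fun w hw n =>
    dist_le_of_le_geometric_of_tendsto (hr := hr1) (hu := hcauchy w hw) r (C*δ^2) (hψ w) n
  -- uniform convergence on every closed ball
  have hTUO : ∀ R : ℝ, 0 < R → TendstoUniformlyOn φ ψ atTop (closedBall 0 R) := by
    intro R hR
    obtain ⟨N, hN⟩ := pow_unbounded_of_one_lt (R / δ) hμ
    have hscale : ∀ w : ℂ, w ∈ closedBall (0:ℂ) R → ‖w / lam^N‖ ≤ δ := by
      intro w hw
      rw [mem_closedBall_zero_iff] at hw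
      rw [habspow, div_le_iff₀ (pow_pos hμ0 N)]
      rw [div_lt_iff₀ hδ0] at hN
      have : ‖w‖ ≤ R := hw
      nlinarith
    have hrt : Tendsto (fun n : ℕ => C*δ^2 * r^n / (1-r)) atTop (𝓝 0) := by
      have h0 := tendsto_pow_atTop_nhds_zero_of_lt_one hr0.le hr1
      have := (h0.const_mul (C*δ^2)).div_const (1-r)
      simpa using this
    have hinner : TendstoUniformlyOn (fun n w => φ n (w / lam^N))
        (fun w => ψ (w / lam^N)) atTop (closedBall 0 R) := by
      rw [Metric.tendstoUniformlyOn_iff]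
      intro ε hε
      filter_upwards [hrt.eventually (gt_mem_nhds hε)] with n hn w hw
      have := hdistψ (w / lam^N) (hscale w hw) n
      rw [dist_comm] at this
      exact lt_of_le_of_lt this hn
    have huc : UniformContinuousOn (g^[N]) (closedBall 0 1) :=
      (isCompact_closedBall (0:ℂ) 1).uniformContinuousOn_of_continuous
        ((hg.continuous.iterate N).continuousOn)
    have hψval : ∀ w : ℂ, ‖w‖ ≤ δ → ‖ψ w‖ ≤ 2*δ := by
      intro w hw
      have h1 : Tendsto (fun n => ‖φ n w‖) atTop (𝓝 (‖ψ w‖)) :=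
        (continuous_norm.tendsto _).comp (hψ w)
      exact le_of_tendsto h1 (Filter.Eventually.of_forall fun n => hφval n w hw)
    have hpost := tendstoUniformlyOn_postcomp hinner
      (fun n x hx => by
        rw [mem_closedBall_zero_iff]
        exact le_trans (hφval n _ (hscale x hx)) (by linarith))
      (fun x hx => by
        rw [mem_closedBall_zero_iff]
        exact le_trans (hψval _ (hscale x hx)) (by linarith))
      huc
    have hshifted : TendstoUniformlyOn (fun n w => φ (N + n) w)
        (fun w => g^[N] (ψ (w / lam^N))) atTop (closedBall 0 R) := by
      simpa only [hshift_eq] using hpost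
    have hlim_eq : Set.EqOn (fun w => g^[N] (ψ (w / lam^N))) ψ (closedBall 0 R) := by
      intro w _
      have h2 : Tendsto (fun n => φ (N + n) w) atTop (𝓝 (g^[N] (ψ (w/lam^N)))) := by
        have := ((hg.continuous.iterate N).tendsto _).comp (hψ (w / lam^N))
        simpa only [Function.comp_def, hshift_eq] using this
      have h1 : Tendsto (fun n => φ (N + n) w) atTop (𝓝 (ψ w)) := by
        have h := hψ w
        rw [← tendsto_add_atTop_iff_nat N] at h
        have heq : (fun n => φ (n + N) w) = fun n => φ (N + n) w := by
          ext n; rw [Nat.add_comm]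
        rwa [heq] at h
      exact tendsto_nhds_unique h2 h1
    exact tendstoUniformlyOn_of_shift N (hshifted.congr_right hlim_eq)
  -- locally uniform convergence
  have hTLU : TendstoLocallyUniformly φ ψ atTop := by
    rw [tendstoLocallyUniformly_iff_forall_isCompact]
    intro K hK
    obtain ⟨R, hR⟩ := hK.isBounded.subset_closedBall 0
    exact (hTUO (max R 1) (by positivity)).mono
      (hR.trans (closedBall_subset_closedBall (le_max_left _ _)))
  -- differentiability of the approximants and the limit
  have hφdiff : ∀ n : ℕ, Differentiable ℂ (φ n) := by
    intro n
    exact (hg.iterate n).comp (differentiable_id.div_const _)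
  have hψdiff : Differentiable ℂ ψ := by
    rw [← differentiableOn_univ]
    have h := hTLU
    rw [← tendstoLocallyUniformlyOn_univ] at h
    exact h.differentiableOn
      (Filter.Eventually.of_forall fun n => (hφdiff n).differentiableOn) isOpen_univ
  -- functional equation
  have hfe : ∀ w : ℂ, g (ψ w) = ψ (lam * w) := by
    intro w
    have h1 : Tendsto (fun n => g (φ n w)) atTop (𝓝 (g (ψ w))) :=
      (hg.continuous.tendsto _).comp (hψ w)
    have h2 : ∀ n : ℕ, g (φ n w) = φ (n+1) (lam * w) := by
      intro n
      simp only [hφdef]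
      rw [Function.iterate_succ_apply']
      congr 2
      rw [pow_succ]
      field_simp
    have h3 : Tendsto (fun n => φ (n+1) (lam*w)) atTop (𝓝 (ψ (lam*w))) :=
      (hψ (lam*w)).comp (tendsto_add_atTop_nat 1)
    refine tendsto_nhds_unique ?_ h3
    rwa [funext h2] at h1
  -- value at 0
  have hψ0 : ψ 0 = 0 := by
    have h1 : ∀ n : ℕ, φ n 0 = 0 := by
      intro n
      simp only [hφdef, zero_div]
      exact Function.iterate_fixed hg0 n
    have h := hψ 0
    rw [funext h1] at h
    exact tendsto_nhds_unique h tendsto_const_nhds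
  -- derivative at 0
  have hψderiv : deriv ψ 0 = 1 := by
    have hTLUd : TendstoLocallyUniformlyOn (deriv ∘ φ) (deriv ψ) atTop Set.univ := by
      have h := hTLU
      rw [← tendstoLocallyUniformlyOn_univ] at h
      exact h.deriv
        (Filter.Eventually.of_forall fun n => (hφdiff n).differentiableOn) isOpen_univ
    have h0 : Tendsto (fun n => deriv (φ n) 0) atTop (𝓝 (deriv ψ 0)) :=
      hTLUd.tendsto_at (Set.mem_univ 0)
    have hconst : ∀ n : ℕ, deriv (φ n) 0 = 1 := by
      intro n
      have hd : HasDerivAt g lam 0 := by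
        have := (hg 0).hasDerivAt
        rwa [hg'] at this
      have hiter : HasDerivAt (g^[n]) (lam^n) 0 := HasDerivAt.iterate 0 hd hg0 n
      have hiter' : HasDerivAt (g^[n]) (lam^n) ((0:ℂ)/lam^n) := by
        rwa [zero_div]
      have hinner : HasDerivAt (fun w : ℂ => w / lam^n) ((lam^n)⁻¹ : ℂ) 0 := by
        simpa using (hasDerivAt_id (0:ℂ)).div_const (lam^n)
      have hcomp : HasDerivAt (φ n) ((lam^n) * (lam^n)⁻¹) 0 :=
        HasDerivAt.comp (0:ℂ) hiter' hinner
      rw [hcomp.deriv, mul_inv_cancel₀ (pow_ne_zero n hlam0)]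
    rw [funext hconst] at h0
    exact tendsto_nhds_unique h0 tendsto_const_nhds
  exact ⟨ψ, hψdiff, hTLU, hfe, hψ0, hψderiv⟩
end

section
/- Let A and B be closed subsets of ℂ, and suppose there exist r > 0 and q ∈ ℂ with |q| > 1 such that the Hausdorff distance between [q^n A]_r and [q^n B]_r tends to 0 as n → ∞ (n ∈ ℕ). Then A and B are asymptotically similar about 0 in the window of radius r: the Hausdorff distance between [jA]_r and [jB]_r tends to 0 as j → ∞ in ℂ (that is, along the filter |j| → ∞ of complex scaling factors). -/
open Complex Metric Filter Function

lemma sphere_point {s : ℝ} (hs : 0 < s) {x : ℂ} (hx : ‖x‖ ≤ s) :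
    ∃ z : ℂ, ‖z‖ = s ∧ dist x z = s - ‖x‖ := by
  rcases eq_or_ne x 0 with rfl | hx0
  · exact ⟨(s : ℂ), by simp [abs_of_pos hs], by simp [abs_of_pos hs]⟩
  · have hxn : (0:ℝ) < ‖x‖ := norm_pos_iff.2 hx0
    refine ⟨((s / ‖x‖ : ℝ) : ℂ) * x, ?_, ?_⟩
    · rw [norm_mul, Complex.norm_real, Real.norm_eq_abs, abs_of_pos (div_pos hs hxn)]
      field_simp
    · have he : x - ((s / ‖x‖ : ℝ) : ℂ) * x = ((1 - s / ‖x‖ : ℝ) : ℂ) * x := by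
        push_cast; ring
      rw [dist_eq_norm, he, norm_mul, Complex.norm_real, Real.norm_eq_abs]
      have h1 : (1 : ℝ) ≤ s / ‖x‖ := (one_le_div hxn).2 hx
      rw [abs_of_nonpos (by linarith)]
      have : ‖x‖ ≠ 0 := by exact_mod_cast hxn.ne'
      field_simp
      ring

lemma infEdist_window_le {Y : Set ℂ} {s : ℝ} (hs : 0 < s) {x y : ℂ}
    (hx : ‖x‖ ≤ s) (hy : s ≤ ‖y‖ ∨ (y ∈ Y ∧ ‖y‖ ≤ s)) :
    Metric.infEDist x (window Y s) ≤ edist x y := by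
  rcases hy with hy | ⟨hyY, hys⟩
  · obtain ⟨z, hz, hdz⟩ := sphere_point hs hx
    have hzmem : z ∈ window Y s := Or.inr (by simpa [mem_sphere_iff_norm] using hz)
    calc Metric.infEDist x (window Y s) ≤ edist x z :=
          Metric.infEDist_le_edist_of_mem hzmem
      _ ≤ edist x y := by
          rw [edist_dist, edist_dist]
          apply ENNReal.ofReal_le_ofReal
          rw [hdz]
          have h1 : ‖y‖ - ‖x‖ ≤ ‖x - y‖ := by
            have := abs_norm_sub_norm_le x y
            rw [abs_le] at this; linarith [this.1]
          rw [dist_eq_norm]; linarith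
  · exact Metric.infEDist_le_edist_of_mem
      (Or.inl ⟨hyY, mem_closedBall_zero_iff.2 hys⟩)

lemma window_infEdist_le_hd {X Y : Set ℂ} {s r : ℝ} (hs : 0 < s) (hsr : s ≤ r)
    {x : ℂ} (hx : x ∈ window X s) :
    Metric.infEDist x (window Y s) ≤
      Metric.hausdorffEDist (window X r) (window Y r) := by
  rcases hx with ⟨hxX, hxb⟩ | hxs
  · have hxnorm : ‖x‖ ≤ s := mem_closedBall_zero_iff.1 hxb
    have hxr : x ∈ window X r :=
      Or.inl ⟨hxX, mem_closedBall_zero_iff.2 (hxnorm.trans hsr)⟩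
    refine le_trans ?_ (Metric.infEDist_le_hausdorffEDist_of_mem hxr)
    rw [Metric.le_infEDist]
    intro y hy
    rcases hy with ⟨hyY, hyb⟩ | hysph
    · rcases le_or_gt ‖y‖ s with h | h
      · exact infEdist_window_le hs hxnorm (Or.inr ⟨hyY, h⟩)
      · exact infEdist_window_le hs hxnorm (Or.inl h.le)
    · have : ‖y‖ = r := mem_sphere_zero_iff_norm.1 hysph
      exact infEdist_window_le hs hxnorm (Or.inl (by rw [this]; exact hsr))
  · have : x ∈ window Y s := Or.inr hxs
    simp [Metric.infEDist_zero_of_mem this]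

lemma hausdorffEdist_window_mono (X Y : Set ℂ) {s r : ℝ} (hs : 0 < s) (hsr : s ≤ r) :
    Metric.hausdorffEDist (window X s) (window Y s) ≤
      Metric.hausdorffEDist (window X r) (window Y r) := by
  apply Metric.hausdorffEDist_le_of_infEDist
  · intro x hx; exact window_infEdist_le_hd hs hsr hx
  · intro x hx
    rw [Metric.hausdorffEDist_comm]
    exact window_infEdist_le_hd hs hsr hx

lemma edist_mul_left' (u a b : ℂ) :
    edist (u * a) (u * b) = (‖u‖₊ : ENNReal) * edist a b := by
  rw [edist_nndist, edist_nndist, nndist_eq_nnnorm, nndist_eq_nnnorm, ← mul_sub,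
    nnnorm_mul, ENNReal.coe_mul]

lemma infEdist_mul_image {u : ℂ} (hu : u ≠ 0) (p : ℂ) (Q : Set ℂ) :
    Metric.infEDist (u * p) ((fun z => u * z) '' Q) =
      (‖u‖₊ : ENNReal) * Metric.infEDist p Q := by
  have h0 : (‖u‖₊ : ENNReal) ≠ 0 := by simpa using hu
  have ht : (‖u‖₊ : ENNReal) ≠ ⊤ := ENNReal.coe_ne_top
  rw [Metric.infEDist, Metric.infEDist, iInf_image, ENNReal.mul_iInf_of_ne h0 ht]
  refine iInf_congr fun q => ?_
  rw [ENNReal.mul_iInf_of_ne h0 ht]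
  exact iInf_congr fun _ => edist_mul_left' u p q

lemma hausdorffEdist_mul_image_le {u : ℂ} (hu : u ≠ 0) (P Q : Set ℂ) :
    Metric.hausdorffEDist ((fun z => u * z) '' P) ((fun z => u * z) '' Q)
      ≤ (‖u‖₊ : ENNReal) * Metric.hausdorffEDist P Q := by
  apply Metric.hausdorffEDist_le_of_infEDist
  · rintro x ⟨p, hp, rfl⟩
    rw [infEdist_mul_image hu]
    exact mul_le_mul_right (Metric.infEDist_le_hausdorffEDist_of_mem hp) _
  · rintro x ⟨w, hw, rfl⟩
    rw [infEdist_mul_image hu]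
    refine mul_le_mul_right ?_ _
    rw [Metric.hausdorffEDist_comm]
    exact Metric.infEDist_le_hausdorffEDist_of_mem hw

lemma image_mul_closedBall {u : ℂ} (hu : u ≠ 0) (t : ℝ) :
    (fun z => u * z) '' Metric.closedBall 0 t = Metric.closedBall (0 : ℂ) (‖u‖ * t) := by
  have hun : (0 : ℝ) < ‖u‖ := norm_pos_iff.2 hu
  ext z
  simp only [Set.mem_image, mem_closedBall_zero_iff]
  constructor
  · rintro ⟨w, hw, rfl⟩
    rw [norm_mul]
    exact mul_le_mul_of_nonneg_left hw (norm_nonneg u)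
  · intro hz
    refine ⟨u⁻¹ * z, ?_, by field_simp⟩
    rw [norm_mul, norm_inv, inv_mul_le_iff₀ hun]
    exact hz

lemma image_mul_sphere {u : ℂ} (hu : u ≠ 0) (t : ℝ) :
    (fun z => u * z) '' Metric.sphere 0 t = Metric.sphere (0 : ℂ) (‖u‖ * t) := by
  have hun : (0 : ℝ) < ‖u‖ := norm_pos_iff.2 hu
  ext z
  simp only [Set.mem_image, mem_sphere_zero_iff_norm]
  constructor
  · rintro ⟨w, hw, rfl⟩
    rw [norm_mul, hw]
  · intro hz
    refine ⟨u⁻¹ * z, ?_, by field_simp⟩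
    rw [norm_mul, norm_inv, hz]
    have : ‖u‖ ≠ 0 := hun.ne'
    field_simp

lemma window_mul_image {u : ℂ} (hu : u ≠ 0) (C : Set ℂ) (r : ℝ) :
    window ((fun z => u * z) '' C) r = (fun z => u * z) '' window C (r / ‖u‖) := by
  have hinj : Function.Injective (fun z : ℂ => u * z) := fun a b hab =>
    mul_left_cancel₀ hu hab
  have hun : (0 : ℝ) < ‖u‖ := norm_pos_iff.2 hu
  have hn : ‖u‖ * (r / ‖u‖) = r := mul_div_cancel₀ r hun.ne'
  unfold window
  rw [Set.image_union, Set.image_inter hinj, image_mul_closedBall hu,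
    image_mul_sphere hu, hn]

lemma window_hd_ne_top (X Y : Set ℂ) {r : ℝ} (hr : 0 < r) :
    Metric.hausdorffEDist (window X r) (window Y r) ≠ ⊤ := by
  have hsub : ∀ S : Set ℂ, window S r ⊆ Metric.closedBall 0 r := by
    intro S z hz
    rcases hz with ⟨_, hb⟩ | hs
    · exact hb
    · exact sphere_subset_closedBall hs
  have hne : ∀ S : Set ℂ, (window S r).Nonempty := by
    intro S
    exact ⟨(r : ℂ), Or.inr (by simp [mem_sphere_zero_iff_norm, abs_of_pos hr])⟩
  exact Metric.hausdorffEdist_ne_top_of_nonempty_of_bounded (hne X) (hne Y)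
    ((Metric.isBounded_closedBall).subset (hsub X))
    ((Metric.isBounded_closedBall).subset (hsub Y))

theorem stmt7 (A B : Set ℂ) (hA : IsClosed A) (hB : IsClosed B)
    (r : ℝ) (hr : 0 < r) (q : ℂ) (hq : 1 < ‖q‖)
    (h : Tendsto (fun n : ℕ =>
        Metric.hausdorffDist (window ((fun z => q ^ n * z) '' A) r)
          (window ((fun z => q ^ n * z) '' B) r)) atTop (nhds 0)) :
    Tendsto (fun j : ℂ =>
        Metric.hausdorffDist (window ((fun z => j * z) '' A) r)
          (window ((fun z => j * z) '' B) r)) (Bornology.cobounded ℂ) (nhds 0) := by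
  have hqn : (1 : ℝ) < ‖q‖ := by exact hq
  have hq0 : (0 : ℝ) < ‖q‖ := lt_trans one_pos hqn
  have hqne : q ≠ 0 := by
    intro h0; rw [h0, norm_zero] at hqn; linarith
  rw [Metric.tendsto_nhds] at h ⊢
  intro ε hε
  obtain ⟨N, hN⟩ := Filter.eventually_atTop.1 (h (ε / ‖q‖) (div_pos hε hq0))
  have hev : ∀ᶠ j : ℂ in Bornology.cobounded ℂ, ‖q‖ ^ N < ‖j‖ :=
    tendsto_norm_cobounded_atTop.eventually (eventually_gt_atTop _)
  filter_upwards [hev] with j hj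
  have hqN1 : (1 : ℝ) ≤ ‖q‖ ^ N := one_le_pow₀ hqn.le
  have hj1 : (1 : ℝ) < ‖j‖ := lt_of_le_of_lt hqN1 hj
  have hj0 : j ≠ 0 := by
    intro h0; rw [h0, norm_zero] at hj1; linarith
  set L := Real.logb ‖q‖ ‖j‖ with hLdef
  set n := ⌊L⌋₊ with hndef
  have hL0 : 0 ≤ L := Real.logb_nonneg hqn hj1.le
  have hlogpow : Real.logb ‖q‖ (‖q‖ ^ N) = N := by
    rw [← Real.rpow_natCast ‖q‖ N, Real.logb_rpow hq0 hqn.ne']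
  have hNL : (N : ℝ) ≤ L :=
    hlogpow ▸ Real.logb_le_logb_of_le hqn (pow_pos hq0 N) hj.le
  have hNn : N ≤ n := Nat.le_floor hNL
  have hqL : ‖q‖ ^ L = ‖j‖ := Real.rpow_logb hq0 hqn.ne' (lt_trans one_pos hj1)
  have h1 : ‖q‖ ^ n ≤ ‖j‖ := by
    have := Real.rpow_le_rpow_of_exponent_le hqn.le (Nat.floor_le hL0)
    rwa [Real.rpow_natCast, hqL] at this
  have h2 : ‖j‖ < ‖q‖ ^ (n + 1) := by
    have hlt : L < ((n + 1 : ℕ) : ℝ) := by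
      push_cast; exact Nat.lt_floor_add_one L
    have := Real.rpow_lt_rpow_of_exponent_lt hqn hlt
    rwa [Real.rpow_natCast, hqL] at this
  set u := j / q ^ n with hudef
  have hqpow0 : (q : ℂ) ^ n ≠ 0 := pow_ne_zero n hqne
  have hu0 : u ≠ 0 := div_ne_zero hj0 hqpow0
  have hun : ‖u‖ = ‖j‖ / ‖q‖ ^ n := by rw [hudef, norm_div, norm_pow]
  have hqpowpos : (0 : ℝ) < ‖q‖ ^ n := pow_pos hq0 n
  have hu1 : 1 ≤ ‖u‖ := by
    rw [hun, le_div_iff₀ hqpowpos, one_mul]; exact h1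
  have huq : ‖u‖ ≤ ‖q‖ := by
    rw [hun, div_le_iff₀ hqpowpos]
    have : ‖q‖ ^ (n + 1) = ‖q‖ * ‖q‖ ^ n := by rw [pow_succ]; ring
    linarith
  have hcomp : ∀ C : Set ℂ,
      (fun z => j * z) '' C = (fun z => u * z) '' ((fun z => q ^ n * z) '' C) := by
    intro C
    rw [← Set.image_comp]
    refine congrFun (congrArg _ ?_) C
    funext z
    show j * z = u * (q ^ n * z)
    rw [hudef]; field_simp
  set s := r / ‖u‖ with hsdef
  have hs0 : 0 < s := div_pos hr (lt_of_lt_of_le one_pos hu1)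
  have hsr : s ≤ r := div_le_self hr.le hu1
  have key : Metric.hausdorffEDist (window ((fun z => j * z) '' A) r)
        (window ((fun z => j * z) '' B) r)
      ≤ (‖u‖₊ : ENNReal) *
        Metric.hausdorffEDist (window ((fun z => q ^ n * z) '' A) r)
          (window ((fun z => q ^ n * z) '' B) r) := by
    rw [hcomp A, hcomp B, window_mul_image hu0, window_mul_image hu0]
    exact le_trans (hausdorffEdist_mul_image_le hu0 _ _)
      (mul_le_mul_right (hausdorffEdist_window_mono _ _ hs0 hsr) _)
  have hfin : Metric.hausdorffEDist (window ((fun z => q ^ n * z) '' A) r)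
      (window ((fun z => q ^ n * z) '' B) r) ≠ ⊤ := window_hd_ne_top _ _ hr
  have hreal : Metric.hausdorffDist (window ((fun z => j * z) '' A) r)
        (window ((fun z => j * z) '' B) r)
      ≤ ‖u‖ * Metric.hausdorffDist (window ((fun z => q ^ n * z) '' A) r)
          (window ((fun z => q ^ n * z) '' B) r) := by
    have := ENNReal.toReal_mono (ENNReal.mul_ne_top ENNReal.coe_ne_top hfin) key
    rwa [ENNReal.toReal_mul, ENNReal.coe_toReal, coe_nnnorm] at this
  have hεn := hN n hNn
  rw [Real.dist_eq, sub_zero, _root_.abs_of_nonneg Metric.hausdorffDist_nonneg] at hεn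
  rw [Real.dist_eq, sub_zero, _root_.abs_of_nonneg Metric.hausdorffDist_nonneg]
  calc Metric.hausdorffDist (window ((fun z => j * z) '' A) r)
        (window ((fun z => j * z) '' B) r)
      ≤ ‖u‖ * Metric.hausdorffDist (window ((fun z => q ^ n * z) '' A) r)
          (window ((fun z => q ^ n * z) '' B) r) := hreal
    _ ≤ ‖q‖ * Metric.hausdorffDist (window ((fun z => q ^ n * z) '' A) r)
          (window ((fun z => q ^ n * z) '' B) r) :=
        mul_le_mul_of_nonneg_right huq Metric.hausdorffDist_nonneg
    _ < ‖q‖ * (ε / ‖q‖) := mul_lt_mul_of_pos_left hεn hq0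
    _ = ε := mul_div_cancel₀ ε hq0.ne'
end
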